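/- For every integer n ≥ 1, the sequence α_n = (∑_{j=0}^{n-1} r_j²) − log(n)/π satisfies 1 ≤ α_n ≤ 1 + 1/π. -/

import Mathlib

open Real

noncomputable def r (n : ℕ) : ℝ := (Nat.choose (2 * n) n : ℝ) / 4 ^ n

noncomputable def α (n : ℕ) : ℝ := (∑ j ∈ Finset.range n, (r j) ^ 2) - Real.log n / π

open Filter
open scoped Nat Topology

lemma r_pos (n : ℕ) : 0 < r n := by
  unfold r
  have : 0 < (2*n).choose n := Nat.choose_pos (by omega)
  positivity

lemma key (n : ℕ) : Real.Wallis.W n * ((2*(n:ℝ)+1) * r n ^ 2) = 1 := by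
  have h0 : (2*n).choose n * n ! * n ! = (2*n)! := by
    have := Nat.choose_mul_factorial_mul_factorial (show n ≤ 2*n by omega)
    simpa [show 2*n - n = n by omega] using this
  have h : ((2*n).choose n : ℝ) * (n ! : ℝ) * (n ! : ℝ) = ((2*n)! : ℝ) := by
    exact_mod_cast congrArg Nat.cast h0
  rw [Real.Wallis.W_eq_factorial_ratio, r]
  have h1 : ((2*n)! : ℝ) > 0 := by positivity
  have h2 : (n ! : ℝ) > 0 := by positivity
  have h3 : (2*(n:ℝ)+1) > 0 := by positivity
  have h4 : (4:ℝ)^n > 0 := by positivity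
  have h16 : (2:ℝ)^(4*n) = (4:ℝ)^n * 4^n := by
    rw [show 4*n = (2*n)+(2*n) by ring, pow_add]
    norm_num [pow_mul]
  field_simp
  rw [h16, ← h]; ring

lemma tendsto_A : Tendsto (fun n : ℕ => (2*(n:ℝ)+1) * r n ^ 2) atTop (𝓝 (2/π)) := by
  have h : ∀ n : ℕ, (2*(n:ℝ)+1) * r n ^ 2 = (Real.Wallis.W n)⁻¹ := by
    intro n
    have hw := Real.Wallis.W_pos n
    field_simp [eq_comm]
    linarith [key n]
  have : Tendsto (fun n : ℕ => (Real.Wallis.W n)⁻¹) atTop (𝓝 (π/2)⁻¹) :=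
    Real.Wallis.tendsto_W_nhds_pi_div_two.inv₀ (ne_of_gt pi_div_two_pos)
  rw [show (2/π : ℝ) = (π/2)⁻¹ by rw [inv_div]]
  simpa [h] using this

lemma tendsto_frac (c : ℝ) : Tendsto (fun n : ℕ => ((n:ℝ)+c)/(2*n+1)) atTop (𝓝 (1/2)) := by
  have h1 : Tendsto (fun n : ℕ => (2*(n:ℝ)+1)) atTop atTop :=
    tendsto_atTop_add_const_right atTop 1 (tendsto_natCast_atTop_atTop.const_mul_atTop two_pos)
  have h2 : Tendsto (fun n : ℕ => (c - 1/2)/(2*(n:ℝ)+1)) atTop (𝓝 0) :=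
    tendsto_const_nhds.div_atTop h1
  have h3 := h2.const_add (1/2 : ℝ)
  rw [add_zero] at h3
  refine h3.congr fun n => ?_
  have : (2*(n:ℝ)+1) ≠ 0 := by positivity
  field_simp
  ring

lemma tendsto_nc (c : ℝ) : Tendsto (fun n : ℕ => ((n:ℝ)+c) * r n ^ 2) atTop (𝓝 (1/π)) := by
  have h := tendsto_A.mul (tendsto_frac c)
  have he : (2/π) * (1/2) = 1/π := by ring
  rw [he] at h
  refine h.congr fun n => ?_
  have : (2*(n:ℝ)+1) ≠ 0 := by positivity
  field_simp

lemma r_succ (n : ℕ) : r (n+1) = r n * ((2*n+1)/(2*n+2)) := by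
  have h := Nat.succ_mul_centralBinom_succ n
  have hc : ∀ m : ℕ, Nat.centralBinom m = (2*m).choose m := fun m => rfl
  rw [hc, hc] at h
  have hR : ((2*(n+1)).choose (n+1) : ℝ) * (n+1) = 2*(2*n+1) * ((2*n).choose n : ℝ) := by
    exact_mod_cast congrArg Nat.cast (by linarith [h] : (2*(n+1)).choose (n+1) * (n+1) = 2*(2*n+1)*((2*n).choose n))
  unfold r
  have h1 : ((n:ℝ)+1) ≠ 0 := by positivity
  have h4 : (4:ℝ)^n ≠ 0 := by positivity
  rw [pow_succ]
  push_cast at hR ⊢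
  rw [div_mul_div_comm, div_eq_div_iff (by positivity) (by positivity)]
  linear_combination (2*(4:ℝ)^n) * hR


lemma u_step (n : ℕ) : (n:ℝ) * r n ^ 2 ≤ ((n:ℝ)+1) * r (n+1) ^ 2 := by
  rw [r_succ]
  have hr := r_pos n
  rw [mul_pow, div_pow]
  have he : ((n:ℝ)+1) * (r n ^ 2 * ((2*n+1)^2/(2*n+2)^2))
      = (((n:ℝ)+1) * r n ^ 2 * (2*n+1)^2)/((2*n+2)^2) := by ring
  rw [he, le_div_iff₀ (by positivity)]
  nlinarith [mul_nonneg (sq_nonneg (r n)) (Nat.cast_nonneg n : (0:ℝ) ≤ n), sq_nonneg (r n)]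

lemma v_step (n : ℕ) : ((n:ℝ)+1+1/3) * r (n+1) ^ 2 ≤ ((n:ℝ)+1/3) * r n ^ 2 := by
  rw [r_succ]
  have hr := r_pos n
  rw [mul_pow, div_pow]
  have he : ((n:ℝ)+1+1/3) * (r n ^ 2 * ((2*n+1)^2/(2*n+2)^2))
      = (((n:ℝ)+1+1/3) * r n ^ 2 * (2*n+1)^2)/((2*n+2)^2) := by ring
  rw [he, div_le_iff₀ (by positivity)]
  nlinarith [mul_nonneg (sq_nonneg (r n)) (Nat.cast_nonneg n : (0:ℝ) ≤ n), sq_nonneg (r n)]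


lemma mono_u : Monotone (fun n : ℕ => (n:ℝ) * r n ^ 2) := by
  apply monotone_nat_of_le_succ
  intro n
  simp only [Nat.cast_add, Nat.cast_one]
  exact u_step n

lemma anti_v : Antitone (fun n : ℕ => ((n:ℝ)+1/3) * r n ^ 2) := by
  apply antitone_nat_of_succ_le
  intro n
  simp only [Nat.cast_add, Nat.cast_one]
  exact v_step n

lemma r_sq_le (n : ℕ) : (n:ℝ) * r n ^ 2 ≤ 1/π := by
  refine ge_of_tendsto (tendsto_nc 0) ?_
  filter_upwards [eventually_ge_atTop n] with m hm
  have h := mono_u hm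
  simp only at h
  simpa using h

lemma le_r_sq (n : ℕ) : 1/π ≤ ((n:ℝ)+1/3) * r n ^ 2 := by
  refine le_of_tendsto (tendsto_nc (1/3)) ?_
  filter_upwards [eventually_ge_atTop n] with m hm
  exact anti_v hm

lemma log_upper (x : ℝ) (h0 : 0 ≤ x) (h1 : x ≤ 1) : Real.log (1+x) ≤ 3*x/(3+x) := by
  have hx : (0:ℝ) < 1 + x := by linarith
  have hy : 0 ≤ Real.log (1+x) := Real.log_nonneg (by linarith)
  have hs : Real.log (1+x) ≤ Real.sinh (Real.log (1+x)) :=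
    (Real.self_le_sinh_iff).mpr hy
  rw [Real.sinh_eq, Real.exp_log hx, Real.exp_neg, Real.exp_log hx] at hs
  have h2 : ((1+x) - (1+x)⁻¹)/2 ≤ 3*x/(3+x) := by
    rw [div_le_div_iff₀ (by norm_num) (by linarith)]
    have hinv : (1+x) * (1+x)⁻¹ = 1 := mul_inv_cancel₀ (ne_of_gt hx)
    nlinarith [mul_pos hx (inv_pos.mpr hx), sq_nonneg (1-x), mul_nonneg (mul_nonneg h0 h0) (sub_nonneg.mpr h1)]
  linarith

lemma log_step_up (j : ℕ) (hj : 1 ≤ j) :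
    Real.log ((j:ℝ)+1) - Real.log j ≤ 1/((j:ℝ)+1/3) := by
  have hj1 : (1:ℝ) ≤ (j:ℝ) := by exact_mod_cast hj
  have hjpos : (0:ℝ) < j := by linarith
  have he : Real.log ((j:ℝ)+1) - Real.log j = Real.log (1 + 1/(j:ℝ)) := by
    rw [← Real.log_div (by positivity) (ne_of_gt hjpos)]
    congr 1
    field_simp
  rw [he]
  have := log_upper (1/(j:ℝ)) (by positivity) (by rw [div_le_one hjpos]; linarith)
  refine this.trans ?_
  rw [div_le_div_iff₀ (by positivity) (by positivity)]
  field_simp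
  exact le_rfl

lemma log_step_down (m : ℕ) : 1/((m:ℝ)+2) ≤ Real.log ((m:ℝ)+2) - Real.log ((m:ℝ)+1) := by
  have h1 : (0:ℝ) < (m:ℝ)+1 := by positivity
  have h2 : (0:ℝ) < (m:ℝ)+2 := by linarith
  have he : Real.log ((m:ℝ)+2) - Real.log ((m:ℝ)+1) = - Real.log (((m:ℝ)+1)/((m:ℝ)+2)) := by
    rw [Real.log_div (ne_of_gt h1) (ne_of_gt h2)]
    ring
  rw [he]
  have := Real.log_le_sub_one_of_pos (show (0:ℝ) < ((m:ℝ)+1)/((m:ℝ)+2) by positivity)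
  have h3 : ((m:ℝ)+1)/((m:ℝ)+2) - 1 = -(1/((m:ℝ)+2)) := by field_simp; norm_num
  linarith

lemma r_zero : r 0 = 1 := by unfold r; norm_num

lemma r_one : r 1 = 1/2 := by unfold r; norm_num

lemma step_up (j : ℕ) (hj : 1 ≤ j) :
    Real.log ((j:ℝ)+1) - Real.log j ≤ π * r j ^ 2 := by
  refine (log_step_up j hj).trans ?_
  have h := le_r_sq j
  have hpi := Real.pi_pos
  have hd : (0:ℝ) < (j:ℝ)+1/3 := by positivity
  rw [div_le_iff₀ hd]
  calc (1:ℝ) = π * (1/π) := by field_simp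
    _ ≤ π * (((j:ℝ)+1/3) * r j ^ 2) := by
        exact mul_le_mul_of_nonneg_left h (le_of_lt hpi)
    _ = π * r j ^ 2 * ((j:ℝ)+1/3) := by ring

lemma step_down (m : ℕ) :
    r (m+2) ^ 2 ≤ (Real.log ((m:ℝ)+2) - Real.log ((m:ℝ)+1)) / π := by
  have hpi := Real.pi_pos
  have h1 := r_sq_le (m+2)
  have h2 := log_step_down m
  have hm2 : (0:ℝ) < (m:ℝ)+2 := by positivity
  have h5 : 1 ≤ (Real.log ((m:ℝ)+2) - Real.log ((m:ℝ)+1)) * ((m:ℝ)+2) := by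
    have := mul_le_mul_of_nonneg_right h2 hm2.le
    have he : (1/((m:ℝ)+2)) * ((m:ℝ)+2) = 1 := by field_simp
    linarith
  push_cast at h1
  rw [le_div_iff₀ hpi]
  have h6 : r (m+2)^2 * ((m:ℝ)+2) * π ≤ (1/π) * π := by
    apply mul_le_mul_of_nonneg_right _ hpi.le
    linarith
  have h7 : (1/π) * π = 1 := by field_simp
  nlinarith [mul_le_mul_of_nonneg_right h5 (mul_nonneg (sq_nonneg (r (m+2))) hpi.le)]

lemma lower_sum (m : ℕ) :
    1 + Real.log ((m:ℝ)+1) / π ≤ ∑ j ∈ Finset.range (m+1), r j ^ 2 := by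
  have hpi := Real.pi_pos
  induction' m with m ih
  · simp [r_zero]
  · rw [Finset.sum_range_succ]
    have hst := step_up (m+1) (by omega)
    push_cast at hst ⊢
    have : (Real.log ((m:ℝ)+1+1) - Real.log ((m:ℝ)+1)) / π ≤ r (m+1) ^ 2 := by
      rw [div_le_iff₀ hpi]
      nlinarith [hst]
    have harith : Real.log ((m:ℝ)+1+1)/π = Real.log ((m:ℝ)+1)/π
        + (Real.log ((m:ℝ)+1+1) - Real.log ((m:ℝ)+1))/π := by ring
    linarith
  
lemma upper_sum (m : ℕ) :
    ∑ j ∈ Finset.range (m+2), r j ^ 2 ≤ 5/4 + Real.log ((m:ℝ)+1) / π := by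
  have hpi := Real.pi_pos
  induction' m with m ih
  · norm_num [Finset.sum_range_succ, r_zero, r_one]
  · rw [show m+1+2 = (m+2)+1 by omega, Finset.sum_range_succ]
    have hst := step_down m
    push_cast at ih ⊢
    have he : Real.log ((m:ℝ)+1+1) = Real.log ((m:ℝ)+2) := by congr 1; ring
    rw [he]
    have harith : Real.log ((m:ℝ)+2)/π = Real.log ((m:ℝ)+1)/π
        + (Real.log ((m:ℝ)+2) - Real.log ((m:ℝ)+1))/π := by ring
    linarith

theorem alpha_bounds (n : ℕ) (hn : 1 ≤ n) : 1 ≤ α n ∧ α n ≤ 1 + 1 / π := by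
  have hpi := Real.pi_pos
  obtain ⟨m, rfl⟩ : ∃ m, n = m + 1 := ⟨n - 1, by omega⟩
  constructor
  · have h := lower_sum m
    unfold α
    push_cast
    linarith
  · rcases Nat.eq_zero_or_pos m with rfl | hm
    · have : α 1 = 1 := by
        simp [α, Finset.sum_range_one, r_zero]
      rw [this]
      have : 0 < 1/π := by positivity
      linarith
    · obtain ⟨k, rfl⟩ : ∃ k, m = k + 1 := ⟨m - 1, by omega⟩
      have h := upper_sum k
      unfold α
      push_cast
      have hlog : Real.log ((k:ℝ)+1) ≤ Real.log ((k:ℝ)+1+1) :=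
        Real.log_le_log (by positivity) (by linarith)
      have h4 : (1:ℝ)/4 ≤ 1/π := by
        apply one_div_le_one_div_of_le hpi Real.pi_le_four
      have he : Real.log ((k:ℝ)+1+1) = Real.log ((k:ℝ)+2) := by congr 1; ring
      rw [show k+1+1 = k+2 by omega] at h ⊢
      push_cast at h ⊢
      have hd : Real.log ((k:ℝ)+1)/π ≤ Real.log ((k:ℝ)+1+1)/π := by gcongr
      linarith
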